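/- Let (R_γ(t))_{t>0} ⊆ L(X) be strongly continuous with ‖R_γ(t)‖ ≤ M₁ t^{γβ−1} for t ∈ (0,1] and ‖R_γ(t)‖ ≤ M₂ t^{−γ−1} for t ≥ 1, where γ ∈ (0,1), β ∈ (0,1]. Let L ≥ 0 and for f, with ‖f(t,x) − f(t,y)‖ ≤ L‖x − y‖ for all t ≥ 0 and x,y ∈ X, define Υx(t) = S_γ(t)x₀ + ∫_0^t R_γ(t−s) f(s, x(s)) ds on the Banach space C_b([0,∞):X). If L·(M₁/(γβ) + M₂/γ) < 1, then Υ is a strict contraction on C_b([0,∞):X) and hence has a unique fixed point. -/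

import Mathlib

open MeasureTheory intervalIntegral

variable {X : Type*} [NormedAddCommGroup X] [NormedSpace ℝ X] [CompleteSpace X]

/-- The solution operator `Υx(t) = S_γ(t)x₀ + ∫_0^t R_γ(t-s) f(s, x(s)) ds`. -/
noncomputable def Upsilon (S R : ℝ → X →L[ℝ] X) (f : ℝ → X → X) (x₀ : X)
    (x : ℝ → X) (t : ℝ) : X :=
  S t x₀ + ∫ s in (0:ℝ)..t, R (t - s) (f s (x s))

/-- A bounded continuous function `[0,∞) → X` (element of `C_b([0,∞):X)`). -/
def BddCont (u : ℝ → X) : Prop :=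
  Continuous u ∧ ∃ C : ℝ, ∀ t : ℝ, ‖u t‖ ≤ C

/-- If `‖R_γ(t)‖ ≤ M₁ t^{γβ-1}` on `(0,1]`, `‖R_γ(t)‖ ≤ M₂ t^{-γ-1}` for `t ≥ 1`, `f` is
`L`-Lipschitz in the second variable and `L (M₁/(γβ) + M₂/γ) < 1`, then `Υ` is a strict
contraction on `C_b([0,∞):X)` and hence has a unique fixed point there. -/
theorem upsilon_contraction_fixed_point
    (γ β M₁ M₂ L : ℝ) (hγ : γ ∈ Set.Ioo (0:ℝ) 1) (hβ : β ∈ Set.Ioc (0:ℝ) 1)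
    (hM₁ : 0 < M₁) (hM₂ : 0 < M₂) (hL : 0 ≤ L)
    (S R : ℝ → X →L[ℝ] X) (x₀ : X)
    (hScont : Continuous fun t => S t x₀)
    (hSbd : ∃ MS : ℝ, ∀ t : ℝ, ‖S t‖ ≤ MS)
    (hRcont : ∀ x : X, ContinuousOn (fun t => R t x) (Set.Ioi 0))
    (hR1 : ∀ t ∈ Set.Ioc (0:ℝ) 1, ‖R t‖ ≤ M₁ * t ^ (γ * β - 1))
    (hR2 : ∀ t ≥ (1:ℝ), ‖R t‖ ≤ M₂ * t ^ (-γ - 1))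
    (f : ℝ → X → X) (hf : Continuous (Function.uncurry f))
    (hfLip : ∀ t ≥ (0:ℝ), ∀ x y : X, ‖f t x - f t y‖ ≤ L * ‖x - y‖)
    (hUps : ∀ u, BddCont u → BddCont (Upsilon S R f x₀ u))
    (hcontr : L * (M₁ / (γ * β) + M₂ / γ) < 1) :
    (∀ u v : ℝ → X, BddCont u → BddCont v → ∀ K : ℝ,
      (∀ t ≥ (0:ℝ), ‖u t - v t‖ ≤ K) →
      ∀ t ≥ (0:ℝ), ‖Upsilon S R f x₀ u t - Upsilon S R f x₀ v t‖ ≤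
        L * (M₁ / (γ * β) + M₂ / γ) * K) ∧
    (∃ u : ℝ → X, BddCont u ∧ (∀ t ≥ (0:ℝ), u t = Upsilon S R f x₀ u t) ∧
      ∀ v : ℝ → X, BddCont v → (∀ t ≥ (0:ℝ), v t = Upsilon S R f x₀ v t) →
        ∀ t ≥ (0:ℝ), v t = u t) := by
  obtain ⟨hγ0, hγ1⟩ := hγ
  obtain ⟨hβ0, hβ1⟩ := hβ
  have hγβ0 : 0 < γ * β := mul_pos hγ0 hβ0
  have hγβ1 : γ * β < 1 := by nlinarith
  have hr0 : (-1:ℝ) < γ * β - 1 := by linarith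
  have hrneg : γ * β - 1 < 0 := by linarith
  set ψ : ℝ → ℝ := fun σ => if σ ≤ 1 then M₁ * σ ^ (γ * β - 1) else M₂ * σ ^ (-γ - 1)
    with hψdef
  -- ψ dominates the operator norm of R
  have hψR : ∀ τ : ℝ, 0 < τ → ‖R τ‖ ≤ ψ τ := by
    intro τ hτ
    by_cases h1 : τ ≤ 1
    · simpa [hψdef, h1] using hR1 τ ⟨hτ, h1⟩
    · simpa [hψdef, h1] using hR2 τ (le_of_not_ge h1)
  -- ψ is nonnegative on [0,∞)
  have hψ0 : ∀ σ : ℝ, 0 ≤ σ → 0 ≤ ψ σ := by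
    intro σ hσ
    by_cases h1 : σ ≤ 1
    · simp only [hψdef, h1, if_true]
      exact mul_nonneg hM₁.le (Real.rpow_nonneg hσ _)
    · simp only [hψdef, h1, if_false]
      exact mul_nonneg hM₂.le (Real.rpow_nonneg hσ _)
  -- integrability of ψ on [0,T] for T ≤ 1
  have hψintA : ∀ T : ℝ, 0 ≤ T → T ≤ 1 → IntervalIntegrable ψ volume 0 T := by
    intro T h0 h1
    have hbase : IntervalIntegrable (fun σ : ℝ => M₁ * σ ^ (γ * β - 1)) volume 0 T :=
      (intervalIntegrable_rpow' hr0).const_mul M₁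
    apply hbase.congr
    intro σ hσ
    rw [Set.uIoc_of_le h0] at hσ
    simp [hψdef, hσ.2.trans h1]
  -- integrability of ψ on [1,T]
  have hψintB : ∀ T : ℝ, 1 ≤ T → IntervalIntegrable ψ volume 1 T := by
    intro T h1
    have hbase : IntervalIntegrable (fun σ : ℝ => M₂ * σ ^ (-γ - 1)) volume 1 T := by
      apply ContinuousOn.intervalIntegrable
      refine continuousOn_const.mul (ContinuousOn.rpow_const continuousOn_id ?_)
      intro σ hσ
      rw [Set.uIcc_of_le h1] at hσ
      refine Or.inl ?_
      intro h; rw [h] at hσ; exact absurd hσ.1 (by norm_num)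
    apply hbase.congr
    intro σ hσ
    rw [Set.uIoc_of_le h1] at hσ
    simp [hψdef, not_le.mpr hσ.1]
  have hψint : ∀ T : ℝ, 0 ≤ T → IntervalIntegrable ψ volume 0 T := by
    intro T h0
    by_cases h1 : T ≤ 1
    · exact hψintA T h0 h1
    · exact (hψintA 1 zero_le_one le_rfl).trans (hψintB T (le_of_not_ge h1))
  -- value of the integral of ψ on [0,T] for T ≤ 1
  have hψvalA : ∀ T : ℝ, 0 ≤ T → T ≤ 1 →
      (∫ σ in (0:ℝ)..T, ψ σ) = M₁ * T ^ (γ * β) / (γ * β) := by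
    intro T h0 h1
    have heq : (∫ σ in (0:ℝ)..T, ψ σ) = ∫ σ in (0:ℝ)..T, M₁ * σ ^ (γ * β - 1) := by
      apply intervalIntegral.integral_congr
      intro σ hσ
      rw [Set.uIcc_of_le h0] at hσ
      simp [hψdef, hσ.2.trans h1]
    rw [heq, intervalIntegral.integral_const_mul, integral_rpow (Or.inl hr0)]
    have he : γ * β - 1 + 1 = γ * β := by ring
    rw [he, Real.zero_rpow (by linarith : γ * β ≠ 0), sub_zero]
    ring
  -- bound for the integral of ψ on [1,T]
  have hψvalB : ∀ T : ℝ, 1 ≤ T → (∫ σ in (1:ℝ)..T, ψ σ) ≤ M₂ / γ := by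
    intro T h1
    have heq : (∫ σ in (1:ℝ)..T, ψ σ) = ∫ σ in (1:ℝ)..T, M₂ * σ ^ (-γ - 1) := by
      apply intervalIntegral.integral_congr_ae
      filter_upwards with σ hσ
      rw [Set.uIoc_of_le h1] at hσ
      simp [hψdef, not_le.mpr hσ.1]
    have h0mem : (0:ℝ) ∉ Set.uIcc (1:ℝ) T := by
      rw [Set.uIcc_of_le h1]
      intro h; exact absurd h.1 (by norm_num)
    rw [heq, intervalIntegral.integral_const_mul,
      integral_rpow (Or.inr ⟨by intro h; apply hγ0.ne'; linarith, h0mem⟩)]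
    have he : (-γ - 1 + 1) = -γ := by ring
    have hT : 0 ≤ T ^ (-γ) := Real.rpow_nonneg (by linarith) _
    rw [Real.one_rpow, he]
    have key : M₂ * ((T ^ (-γ) - 1) / (-γ)) = M₂ * (1 - T ^ (-γ)) / γ := by
      rw [div_neg]; ring
    rw [key, div_le_div_iff₀ hγ0 hγ0]
    nlinarith [mul_nonneg (mul_nonneg hM₂.le hT) hγ0.le]
  -- the total integral bound
  have hψle : ∀ T : ℝ, 0 ≤ T → (∫ σ in (0:ℝ)..T, ψ σ) ≤ M₁ / (γ * β) + M₂ / γ := by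
    intro T h0
    have hM₂γ : 0 ≤ M₂ / γ := div_nonneg hM₂.le hγ0.le
    by_cases h1 : T ≤ 1
    · rw [hψvalA T h0 h1]
      have h2 : M₁ * T ^ (γ * β) / (γ * β) ≤ M₁ / (γ * β) := by
        rw [div_le_div_iff₀ hγβ0 hγβ0]
        nlinarith [mul_le_mul_of_nonneg_left (Real.rpow_le_one h0 h1 hγβ0.le)
          (mul_nonneg hM₁.le hγβ0.le)]
      linarith
    · push_neg at h1
      rw [← intervalIntegral.integral_add_adjacent_intervals (hψintA 1 zero_le_one le_rfl)
        (hψintB T h1.le)]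
      have hA := hψvalA 1 zero_le_one le_rfl
      rw [Real.one_rpow, mul_one] at hA
      rw [hA]
      linarith [hψvalB T h1.le]
  -- uniform bound on ‖R τ‖ for τ ≥ a > 0
  have hRb : ∀ a : ℝ, 0 < a → ∀ τ : ℝ, a ≤ τ → ‖R τ‖ ≤ M₁ * (min a 1) ^ (γ * β - 1) + M₂ := by
    intro a ha τ hτ
    have hmin0 : 0 < min a 1 := lt_min ha one_pos
    by_cases h1 : τ ≤ 1
    · have h2 : ‖R τ‖ ≤ M₁ * τ ^ (γ * β - 1) := hR1 τ ⟨lt_of_lt_of_le ha hτ, h1⟩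
      have h3 : τ ^ (γ * β - 1) ≤ (min a 1) ^ (γ * β - 1) :=
        Real.rpow_le_rpow_of_nonpos hmin0 (le_trans (min_le_left a 1) hτ) hrneg.le
      calc ‖R τ‖ ≤ M₁ * τ ^ (γ * β - 1) := h2
        _ ≤ M₁ * (min a 1) ^ (γ * β - 1) := mul_le_mul_of_nonneg_left h3 hM₁.le
        _ ≤ M₁ * (min a 1) ^ (γ * β - 1) + M₂ := by linarith
    · push_neg at h1
      have h2 : ‖R τ‖ ≤ M₂ * τ ^ (-γ - 1) := hR2 τ h1.le
      have h3 : τ ^ (-γ - 1) ≤ 1 :=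
        Real.rpow_le_one_of_one_le_of_nonpos h1.le (by linarith)
      have h4 : 0 ≤ M₁ * (min a 1) ^ (γ * β - 1) :=
        mul_nonneg hM₁.le (Real.rpow_nonneg hmin0.le _)
      nlinarith
  -- continuity of the integrand
  have hgcont : ∀ w : ℝ → X, Continuous w → ∀ t : ℝ, 0 < t →
      ContinuousOn (fun s => R (t - s) (w s)) (Set.Ico 0 t) := by
    intro w hw t ht s₀ hs₀
    obtain ⟨hs₀0, hs₀t⟩ := hs₀
    set a : ℝ := (t - s₀) / 2 with ha
    have ha0 : 0 < a := by rw [ha]; linarith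
    have hts₀ : t - s₀ ∈ Set.Ioi (0:ℝ) := Set.mem_Ioi.mpr (by linarith)
    have h2 : ContinuousWithinAt (fun s => R (t - s) (w s₀)) (Set.Ico 0 t) s₀ := by
      refine ContinuousWithinAt.comp (hRcont (w s₀) (t - s₀) hts₀)
        ((continuous_const.sub continuous_id).continuousWithinAt) ?_
      intro s hs
      have := hs.2
      simp only [Set.mem_Ioi, id_eq]
      linarith
    have h1 : Filter.Tendsto (fun s => R (t - s) (w s - w s₀))
        (nhdsWithin s₀ (Set.Ico 0 t)) (nhds 0) := by
      apply squeeze_zero_norm'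
        (a := fun s => (M₁ * (min a 1) ^ (γ * β - 1) + M₂) * ‖w s - w s₀‖)
      · have hball : ∀ᶠ s in nhdsWithin s₀ (Set.Ico 0 t), |s - s₀| < a :=
          (eventually_abs_sub_lt s₀ ha0).filter_mono nhdsWithin_le_nhds
        filter_upwards [hball] with s hs
        have habs := abs_lt.mp hs
        have hτ : a ≤ t - s := by rw [ha] at *; linarith [habs.2]
        calc ‖R (t - s) (w s - w s₀)‖ ≤ ‖R (t - s)‖ * ‖w s - w s₀‖ :=
              (R (t - s)).le_opNorm _
          _ ≤ (M₁ * (min a 1) ^ (γ * β - 1) + M₂) * ‖w s - w s₀‖ :=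
              mul_le_mul_of_nonneg_right (hRb a ha0 _ hτ) (norm_nonneg _)
      · have hsub : Filter.Tendsto (fun s => w s - w s₀)
            (nhdsWithin s₀ (Set.Ico 0 t)) (nhds (w s₀ - w s₀)) :=
          ((hw.tendsto s₀).sub tendsto_const_nhds).mono_left nhdsWithin_le_nhds
        simpa using hsub.norm.const_mul (M₁ * (min a 1) ^ (γ * β - 1) + M₂)
    have hsum := h1.add h2
    have hfun : (fun s => R (t - s) (w s - w s₀) + R (t - s) (w s₀))
        = fun s => R (t - s) (w s) := by
      funext s
      rw [map_sub, sub_add_cancel]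
    rw [hfun] at hsum
    simpa [ContinuousWithinAt] using hsum
  -- integrability of the integrand
  have hgint : ∀ w : ℝ → X, Continuous w → ∀ t : ℝ, 0 < t →
      IntervalIntegrable (fun s => R (t - s) (f s (w s))) volume 0 t := by
    intro w hw t ht
    have hw' : Continuous (fun s => f s (w s)) := hf.comp (continuous_id.prodMk hw)
    obtain ⟨C, hC⟩ := (isCompact_Icc (a := (0:ℝ)) (b := t)).exists_bound_of_continuousOn
      hw'.continuousOn
    rw [intervalIntegrable_iff, Set.uIoc_of_le ht.le]
    have hbd : IntegrableOn (fun s => C * ψ (t - s)) (Set.Ioc 0 t) volume := by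
      have h1 : IntervalIntegrable (fun s => ψ (t - s)) volume 0 t := by
        simpa using ((hψint t ht.le).comp_sub_left t).symm
      have h2 := (h1.const_mul C)
      rw [intervalIntegrable_iff, Set.uIoc_of_le ht.le] at h2
      exact h2
    apply Integrable.mono' hbd
    · have hm := ((hgcont (fun s => f s (w s)) hw' t ht).aestronglyMeasurable (μ := volume) measurableSet_Ico)
      rwa [Measure.restrict_congr_set Ico_ae_eq_Ioc] at hm
    · have hne : ∀ᵐ s : ℝ ∂volume.restrict (Set.Ioc 0 t), s ≠ t := by
        refine ae_restrict_of_ae ?_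
        rw [ae_iff]
        simp only [ne_eq, not_not, Set.setOf_eq_eq_singleton]
        exact measure_singleton t
      filter_upwards [hne, ae_restrict_mem measurableSet_Ioc] with s hst hs
      have hst' : s < t := lt_of_le_of_ne hs.2 hst
      have hts : 0 < t - s := by linarith
      calc ‖R (t - s) (f s (w s))‖ ≤ ‖R (t - s)‖ * ‖f s (w s)‖ := (R _).le_opNorm _
        _ ≤ ψ (t - s) * C :=
            mul_le_mul (hψR _ hts) (hC s ⟨hs.1.le, hs.2⟩) (norm_nonneg _) (hψ0 _ hts.le)
        _ = C * ψ (t - s) := mul_comm _ _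
  -- the main contraction estimate
  have key : ∀ u v : ℝ → X, BddCont u → BddCont v → ∀ K : ℝ,
      (∀ t ≥ (0:ℝ), ‖u t - v t‖ ≤ K) →
      ∀ t ≥ (0:ℝ), ‖Upsilon S R f x₀ u t - Upsilon S R f x₀ v t‖ ≤
        L * (M₁ / (γ * β) + M₂ / γ) * K := by
    intro u v hu hv K hK t ht
    have hK0 : 0 ≤ K := le_trans (norm_nonneg _) (hK 0 le_rfl)
    have hLK0 : 0 ≤ L * K := mul_nonneg hL hK0
    have hsum0 : 0 ≤ M₁ / (γ * β) + M₂ / γ :=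
      add_nonneg (div_nonneg hM₁.le hγβ0.le) (div_nonneg hM₂.le hγ0.le)
    rcases eq_or_lt_of_le ht with heq0 | htpos
    · simp only [Upsilon, ← heq0, intervalIntegral.integral_same, add_zero, sub_self, norm_zero]
      exact mul_nonneg (mul_nonneg hL hsum0) hK0
    have hIu := hgint u hu.1 t htpos
    have hIv := hgint v hv.1 t htpos
    have hdiff : Upsilon S R f x₀ u t - Upsilon S R f x₀ v t
        = ∫ s in (0:ℝ)..t, (R (t - s) (f s (u s)) - R (t - s) (f s (v s))) := by
      simp only [Upsilon, add_sub_add_left_eq_sub]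
      exact (intervalIntegral.integral_sub hIu hIv).symm
    rw [hdiff]
    have hne : ∀ᵐ s : ℝ ∂volume.restrict (Set.uIoc 0 t), s ≠ t := by
      refine ae_restrict_of_ae ?_
      rw [ae_iff]
      simp only [ne_eq, not_not, Set.setOf_eq_eq_singleton]
      exact measure_singleton t
    have hmemIoc : Set.uIoc (0:ℝ) t = Set.Ioc 0 t := Set.uIoc_of_le ht
    have hb : ∀ᵐ s : ℝ ∂volume.restrict (Set.uIoc 0 t),
        ‖R (t - s) (f s (u s)) - R (t - s) (f s (v s))‖ ≤ ψ (t - s) * (L * K) := by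
      filter_upwards [hne, ae_restrict_mem measurableSet_uIoc] with s hst hs
      rw [hmemIoc] at hs
      have hst' : s < t := lt_of_le_of_ne hs.2 hst
      have hts : 0 < t - s := by linarith
      have hmap : R (t - s) (f s (u s)) - R (t - s) (f s (v s))
          = R (t - s) (f s (u s) - f s (v s)) := (map_sub _ _ _).symm
      rw [hmap]
      calc ‖R (t - s) (f s (u s) - f s (v s))‖
          ≤ ‖R (t - s)‖ * ‖f s (u s) - f s (v s)‖ := (R _).le_opNorm _
        _ ≤ ψ (t - s) * (L * K) := by
            refine mul_le_mul (hψR _ hts) ?_ (norm_nonneg _) (hψ0 _ hts.le)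
            exact (hfLip s hs.1.le _ _).trans
              (mul_le_mul_of_nonneg_left (hK s hs.1.le) hL)
    have hbint : IntervalIntegrable (fun s => ψ (t - s) * (L * K)) volume 0 t := by
      have h1 : IntervalIntegrable (fun s => ψ (t - s)) volume 0 t := by
        simpa using ((hψint t ht).comp_sub_left t).symm
      exact h1.mul_const (L * K)
    have hmain := intervalIntegral.norm_integral_le_abs_of_norm_le hb hbint
    have hval : (∫ s in (0:ℝ)..t, ψ (t - s) * (L * K))
        = (∫ σ in (0:ℝ)..t, ψ σ) * (L * K) := by
      rw [intervalIntegral.integral_mul_const]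
      congr 1
      simpa using intervalIntegral.integral_comp_sub_left ψ t
    have hψnon : 0 ≤ ∫ σ in (0:ℝ)..t, ψ σ :=
      intervalIntegral.integral_nonneg ht fun σ hσ => hψ0 σ hσ.1
    calc ‖∫ s in (0:ℝ)..t, (R (t - s) (f s (u s)) - R (t - s) (f s (v s)))‖
        ≤ |∫ s in (0:ℝ)..t, ψ (t - s) * (L * K)| := hmain
      _ = (∫ σ in (0:ℝ)..t, ψ σ) * (L * K) := by
          rw [hval, abs_of_nonneg (mul_nonneg hψnon hLK0)]
      _ ≤ (M₁ / (γ * β) + M₂ / γ) * (L * K) :=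
          mul_le_mul_of_nonneg_right (hψle t ht) hLK0
      _ = L * (M₁ / (γ * β) + M₂ / γ) * K := by ring
  refine ⟨key, ?_⟩
  -- Banach fixed point argument
  have hc0 : 0 ≤ L * (M₁ / (γ * β) + M₂ / γ) :=
    mul_nonneg hL (add_nonneg (div_nonneg hM₁.le hγβ0.le) (div_nonneg hM₂.le hγ0.le))
  have hBCF : ∀ u : BoundedContinuousFunction ℝ X, BddCont ⇑u :=
    fun u => ⟨u.continuous, ‖u‖, fun t => u.norm_coe_le_norm t⟩
  have hUmax : ∀ u : BoundedContinuousFunction ℝ X, ∃ C : ℝ,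
      Continuous (fun t => Upsilon S R f x₀ ⇑u (max t 0)) ∧
      ∀ t : ℝ, ‖Upsilon S R f x₀ ⇑u (max t 0)‖ ≤ C := by
    intro u
    obtain ⟨hc1, C, hC⟩ := hUps ⇑u (hBCF u)
    exact ⟨C, hc1.comp (continuous_id.max continuous_const), fun t => hC _⟩
  choose CΦ hΦcont hΦbd using hUmax
  set Φ : BoundedContinuousFunction ℝ X → BoundedContinuousFunction ℝ X := fun u =>
    BoundedContinuousFunction.ofNormedAddCommGroup _ (hΦcont u) (CΦ u) (hΦbd u) with hΦ
  have hΦapp : ∀ (u : BoundedContinuousFunction ℝ X) (t : ℝ),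
      Φ u t = Upsilon S R f x₀ ⇑u (max t 0) := fun u t => rfl
  have hlip : LipschitzWith (Real.toNNReal (L * (M₁ / (γ * β) + M₂ / γ))) Φ := by
    apply LipschitzWith.of_dist_le_mul
    intro u v
    rw [Real.coe_toNNReal _ hc0,
      BoundedContinuousFunction.dist_le (mul_nonneg hc0 dist_nonneg)]
    intro t
    rw [hΦapp, hΦapp, dist_eq_norm]
    exact key ⇑u ⇑v (hBCF u) (hBCF v) (dist u v)
      (fun s _ => by rw [← dist_eq_norm]; exact BoundedContinuousFunction.dist_coe_le_dist s)
      (max t 0) (le_max_right t 0)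
  have hcw : ContractingWith (Real.toNNReal (L * (M₁ / (γ * β) + M₂ / γ))) Φ := by
    refine ⟨?_, hlip⟩
    rw [← NNReal.coe_lt_coe, NNReal.coe_one, Real.coe_toNNReal _ hc0]
    exact hcontr
  haveI : Nonempty (BoundedContinuousFunction ℝ X) := ⟨0⟩
  set φ := ContractingWith.fixedPoint Φ hcw with hφ
  have hfixφ : Φ φ = φ := hcw.fixedPoint_isFixedPt
  refine ⟨⇑φ, hBCF φ, ?_, ?_⟩
  · intro t ht
    conv_lhs => rw [← hfixφ]
    rw [hΦapp, max_eq_left ht]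
  · intro v hv hvfix t ht
    obtain ⟨Cv, hCv⟩ := hv.2
    set vB : BoundedContinuousFunction ℝ X := BoundedContinuousFunction.ofNormedAddCommGroup
      (fun s => v (max s 0)) (hv.1.comp (continuous_id.max continuous_const)) Cv
      (fun s => hCv _) with hvB
    have hVapp : ∀ s : ℝ, vB s = v (max s 0) := fun s => rfl
    have hUeq : ∀ s : ℝ, 0 ≤ s → Upsilon S R f x₀ ⇑vB s = Upsilon S R f x₀ v s := by
      intro s hs
      simp only [Upsilon]
      congr 1
      apply intervalIntegral.integral_congr
      intro r hr
      rw [Set.uIcc_of_le hs] at hr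
      have h : vB r = v r := by rw [hVapp, max_eq_left hr.1]
      show R (s - r) (f r (vB r)) = R (s - r) (f r (v r))
      rw [h]
    have hfixvB : Φ vB = vB := by
      ext s
      rw [hΦapp, hVapp, hUeq _ (le_max_right s 0), ← hvfix _ (le_max_right s 0)]
    have hveq : vB = φ := hcw.fixedPoint_unique hfixvB
    calc v t = vB t := by rw [hVapp, max_eq_left ht]
      _ = φ t := by rw [hveq]
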